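/- Let A be an associative unital ℂ-algebra, ω ∈ ℂ, and let r₁, …, r_K ∈ A satisfy the braid relations r_i r_{i+1} r_i = r_{i+1} r_i r_{i+1} (for 1 ≤ i ≤ K−1), r_i r_j = r_j r_i whenever |i−j| ≥ 2, and the Hecke condition r_i² = 1 + ω r_i. Define the Jucys–Murphy elements by j₁ = 1 and j_p = r_{p−1} j_{p−1} r_{p−1} for 2 ≤ p ≤ K+1. Then for every 1 ≤ k ≤ K and every n ≥ 1: r_k · j_{k+1}ⁿ = j_kⁿ · r_k + ω Σ_{s=1}^{n} j_{k+1}^s · j_k^{n−s}. -/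

import Mathlib

open Finset

/-- Auxiliary braid/Hecke commutation step: if `a b a = b a b`, `b` commutes with `X`,
and `X` commutes with `a X a`, then `a X a` commutes with `b (a X a) b`. -/
lemma aux_comm_stmt14 {A : Type*} [Ring A] (a b X : A)
    (hbr : a * b * a = b * a * b)
    (hbX : b * X = X * b)
    (hXX : X * (a * X * a) = (a * X * a) * X) :
    (a * X * a) * (b * (a * X * a) * b) = (b * (a * X * a) * b) * (a * X * a) := by
  have Hba : ∀ t : A, a * (b * (a * t)) = b * (a * (b * t)) := fun t => by
    rw [← mul_assoc, ← mul_assoc, hbr, mul_assoc, mul_assoc]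
  have HXb : ∀ t : A, X * (b * t) = b * (X * t) := fun t => by
    rw [← mul_assoc, ← hbX, mul_assoc]
  have HX : ∀ t : A, X * (a * (X * (a * t))) = a * (X * (a * (X * t))) := fun t => by
    have h := congrArg (· * t) hXX
    simpa [mul_assoc] using h
  have hbrT : b * (a * b) = a * (b * a) := by
    have := hbr.symm; simpa [mul_assoc] using this
  simp only [mul_assoc]
  rw [Hba (X * (a * b)), ← HXb (a * b), HXb (a * (X * (b * (a * b)))), hbrT,
    HX (b * a), Hba (X * a), ← HXb a, HXb (a * (X * (b * a))), ← Hba (X * (a * (X * (b * a))))]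

/-- in a ℂ-algebra with Hecke generators `r₁,…,r_K` and Jucys–Murphy
elements `j₁ = 1`, `j_p = r_{p−1} j_{p−1} r_{p−1}`, one has
`r_k j_{k+1}ⁿ = j_kⁿ r_k + ω Σ_{s=1}^{n} j_{k+1}^s j_k^{n−s}`. -/
theorem stmt_14 (A : Type*) [Ring A] [Algebra ℂ A] (K : ℕ) (ω : ℂ) (r : ℕ → A)
    (hbraid : ∀ i : ℕ, 1 ≤ i → i + 1 ≤ K →
      r i * r (i + 1) * r i = r (i + 1) * r i * r (i + 1))
    (hcomm : ∀ i j : ℕ, 1 ≤ i → 1 ≤ j → i ≤ K → j ≤ K → i + 2 ≤ j →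
      r i * r j = r j * r i)
    (hhecke : ∀ i : ℕ, 1 ≤ i → i ≤ K → r i * r i = 1 + ω • r i)
    (J : ℕ → A) (hJ1 : J 1 = 1)
    (hJ : ∀ p : ℕ, 2 ≤ p → p ≤ K + 1 → J p = r (p - 1) * J (p - 1) * r (p - 1)) :
    ∀ k n : ℕ, 1 ≤ k → k ≤ K → 1 ≤ n →
      r k * J (k + 1) ^ n
        = J k ^ n * r k + ω • ∑ s ∈ Icc 1 n, J (k + 1) ^ s * J k ^ (n - s) := by
  -- r i commutes with J m whenever m < i
  have hE : ∀ m, 1 ≤ m → ∀ i, m < i → i ≤ K → r i * J m = J m * r i := by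
    intro m hm
    induction m, hm using Nat.le_induction with
    | base => intro i _ _; rw [hJ1, one_mul, mul_one]
    | succ m hm ihm =>
      intro i hmi hiK
      have hJm : J (m + 1) = r m * J m * r m := by
        simpa using hJ (m + 1) (by omega) (by omega)
      have h1c : Commute (r i) (r m) :=
        (hcomm m i hm (by omega) (by omega) hiK (by omega)).symm
      have h2c : Commute (r i) (J m) := ihm i (by omega) hiK
      rw [hJm]
      exact (h1c.mul_right h2c).mul_right h1c
  -- J k commutes with J (k+1)
  have key : ∀ k, 1 ≤ k → k ≤ K → J k * J (k + 1) = J (k + 1) * J k := by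
    intro k hk
    induction k, hk using Nat.le_induction with
    | base => intro _; rw [hJ1, one_mul, mul_one]
    | succ k hk ihk =>
      intro hK
      have hJk1 : J (k + 1) = r k * J k * r k := by
        simpa using hJ (k + 1) (by omega) (by omega)
      have hJk2 : J (k + 2) = r (k + 1) * J (k + 1) * r (k + 1) := by
        simpa using hJ (k + 2) (by omega) (by omega)
      have hbr := hbraid k hk hK
      have hbX : r (k + 1) * J k = J k * r (k + 1) := hE k hk (k + 1) (by omega) hK
      have hXX : J k * (r k * J k * r k) = (r k * J k * r k) * J k := by
        rw [← hJk1]; exact ihk (by omega)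
      rw [hJk2, hJk1]
      exact aux_comm_stmt14 (r k) (r (k + 1)) (J k) hbr hbX hXX
  intro k n hk hkK hn
  have hJk1 : J (k + 1) = r k * J k * r k := by
    simpa using hJ (k + 1) (by omega) (by omega)
  -- basic relation r_k J_{k+1} = J_k r_k + ω J_{k+1}
  have hrel : r k * J (k + 1) = J k * r k + ω • J (k + 1) := by
    rw [hJk1]
    calc r k * (r k * J k * r k) = (r k * r k) * (J k * r k) := by
          simp only [mul_assoc]
      _ = (1 + ω • r k) * (J k * r k) := by rw [hhecke k hk hkK]
      _ = J k * r k + ω • (r k * (J k * r k)) := by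
          rw [add_mul, one_mul, smul_mul_assoc]
      _ = J k * r k + ω • (r k * J k * r k) := by rw [mul_assoc]
  have hC : Commute (J k) (J (k + 1)) := key k hk hkK
  induction n, hn using Nat.le_induction with
  | base =>
    simp only [pow_one, Icc_self, sum_singleton, Nat.sub_self, pow_zero, mul_one]
    exact hrel
  | succ n hn ihn =>
    have hSJ : (∑ s ∈ Icc 1 n, J (k + 1) ^ s * J k ^ (n - s)) * J (k + 1)
        = ∑ s ∈ Icc 1 n, J (k + 1) ^ (s + 1) * J k ^ (n - s) := by
      rw [sum_mul]
      refine sum_congr rfl fun s _ => ?_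
      rw [mul_assoc, (hC.pow_left (n - s)).eq, ← mul_assoc, ← pow_succ]
      -- (J k)^(n-s) * J(k+1) = J(k+1) * (J k)^(n-s); then J(k+1)^s * J(k+1) = ^(s+1)
    have hsum : ∑ s ∈ Icc 1 (n + 1), J (k + 1) ^ s * J k ^ (n + 1 - s)
        = J (k + 1) * J k ^ n + ∑ s ∈ Icc 1 n, J (k + 1) ^ (s + 1) * J k ^ (n - s) := by
      rw [← Finset.Ico_add_one_right_eq_Icc, ← Finset.Ico_add_one_right_eq_Icc, Finset.sum_Ico_eq_sum_range,
        Finset.sum_Ico_eq_sum_range]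
      norm_num
      rw [Finset.sum_range_succ']
      rw [add_comm]
      congr 1
      · simp
      · refine sum_congr rfl fun i _ => ?_
        congr 2
        omega
    calc r k * J (k + 1) ^ (n + 1)
        = (r k * J (k + 1) ^ n) * J (k + 1) := by rw [pow_succ, ← mul_assoc]
      _ = (J k ^ n * r k + ω • ∑ s ∈ Icc 1 n, J (k + 1) ^ s * J k ^ (n - s)) * J (k + 1) := by
          rw [ihn]
      _ = J k ^ n * (r k * J (k + 1))
            + ω • ((∑ s ∈ Icc 1 n, J (k + 1) ^ s * J k ^ (n - s)) * J (k + 1)) := by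
          rw [add_mul, smul_mul_assoc, mul_assoc]
      _ = J k ^ n * (J k * r k) + ω • (J k ^ n * J (k + 1))
            + ω • ((∑ s ∈ Icc 1 n, J (k + 1) ^ s * J k ^ (n - s)) * J (k + 1)) := by
          rw [hrel, mul_add, mul_smul_comm]
      _ = J k ^ (n + 1) * r k
            + ω • (J (k + 1) * J k ^ n + ∑ s ∈ Icc 1 n, J (k + 1) ^ (s + 1) * J k ^ (n - s)) := by
          rw [pow_succ, mul_assoc, hSJ, (hC.symm.pow_right n).eq, smul_add, add_assoc]
      _ = J k ^ (n + 1) * r k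
            + ω • ∑ s ∈ Icc 1 (n + 1), J (k + 1) ^ s * J k ^ (n + 1 - s) := by
          rw [hsum]
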